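/- For the planar vector field dx/dt = -ω J x + (-2βω + k_t/(ω(‖x‖+ε))) x₂ e₂ with ω, β, k_t, ε > 0, the radial derivative satisfies xᵀẋ = x₂²(-2βω + k_t/(ω(‖x‖+ε))), which is positive whenever 0 < ‖x‖ < k_t/(2βω²) − ε and negative whenever ‖x‖ > k_t/(2βω²) − ε. -/

import Mathlib

/-- Energy-dissipation computation underlying Proposition 1 (oscillatory spring
energization): for the planar field `ẋ = -ωJx + (-2βω + k_t/(ω(‖x‖+ε))) x₂ e₂`,
the radial derivative `xᵀẋ` equals `x₂²(-2βω + k_t/(ω(‖x‖+ε)))`, which is positive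
inside the critical radius `k_t/(2βω²) - ε` and negative outside (for `x₂ ≠ 0`). -/
theorem stmt_0 (ω β kt ε : ℝ) (hω : 0 < ω) (hβ : 0 < β) (hkt : 0 < kt) (hε : 0 < ε)
    (hcrit : ε < kt / (2 * β * ω ^ 2)) (x : ℝ × ℝ)
    (n : ℝ) (hn : n = Real.sqrt (x.1 ^ 2 + x.2 ^ 2))
    (f : ℝ × ℝ) (hf : f = (ω * x.2,
      -ω * x.1 + (-2 * β * ω + kt / (ω * (n + ε))) * x.2)) :
    x.1 * f.1 + x.2 * f.2 = x.2 ^ 2 * (-2 * β * ω + kt / (ω * (n + ε))) ∧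
    (x.2 ≠ 0 → 0 < n → n < kt / (2 * β * ω ^ 2) - ε →
      0 < x.1 * f.1 + x.2 * f.2) ∧
    (x.2 ≠ 0 → kt / (2 * β * ω ^ 2) - ε < n →
      x.1 * f.1 + x.2 * f.2 < 0) := by
  have hn0 : 0 ≤ n := hn ▸ Real.sqrt_nonneg _
  have hden : 0 < ω * (n + ε) := by positivity
  have heq : x.1 * f.1 + x.2 * f.2 = x.2 ^ 2 * (-2 * β * ω + kt / (ω * (n + ε))) := by
    subst hf; simp; ring
  refine ⟨heq, ?_, ?_⟩
  · intro h2 _ hlt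
    rw [heq]
    have hx2 : 0 < x.2 ^ 2 := by positivity
    have hfac : 0 < -2 * β * ω + kt / (ω * (n + ε)) := by
      have h1 : ω * (n + ε) < ω * (kt / (2 * β * ω ^ 2)) := by
        apply mul_lt_mul_of_pos_left _ hω
        linarith
      have h2 : 2 * β * ω < kt / (ω * (n + ε)) := by
        rw [lt_div_iff₀ hden]
        have : ω * (kt / (2 * β * ω ^ 2)) * (2 * β * ω) = kt := by
          field_simp
        nlinarith [mul_lt_mul_of_pos_right h1 (by positivity : (0:ℝ) < 2 * β * ω)]
      linarith
    positivity
  · intro h2 hgt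
    rw [heq]
    have hx2 : 0 < x.2 ^ 2 := by positivity
    have hfac : -2 * β * ω + kt / (ω * (n + ε)) < 0 := by
      have h1 : ω * (kt / (2 * β * ω ^ 2)) < ω * (n + ε) := by
        apply mul_lt_mul_of_pos_left _ hω
        linarith
      have h2 : kt / (ω * (n + ε)) < 2 * β * ω := by
        rw [div_lt_iff₀ hden]
        have : ω * (kt / (2 * β * ω ^ 2)) * (2 * β * ω) = kt := by
          field_simp
        nlinarith [mul_lt_mul_of_pos_right h1 (by positivity : (0:ℝ) < 2 * β * ω)]
      linarith
    exact mul_neg_of_pos_of_neg hx2 hfac
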